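/- Let R = ∏_{j=1}^{n} [α_j, β_j] ⊂ ℝⁿ be a hyperrectangle of positive Lebesgue measure with side lengths δ_j = β_j − α_j, let L ≥ 0, p ∈ ℝ, and c ∈ R, and let A be the set of functions τ : R → ℝ that are L-Lipschitz with respect to the ℓ¹-norm and satisfy ∫_R τ(s) ds = p. Then sup_{τ∈A} τ(c) = p/λ(R) + (L/(2λ(R))) Σ_{j=1}^{n} (∏_{ℓ≠j} δ_ℓ) ((c_j − α_j)² + (β_j − c_j)²), and the supremum is attained by some τ ∈ A. -/

import Mathlib

open MeasureTheory Real Finset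

noncomputable section

lemma one_dim_abs_integral (a b m : ℝ) (ham : a ≤ m) (hmb : m ≤ b) :
    ∫ t in Set.Icc a b, |t - m| = ((m - a) ^ 2 + (b - m) ^ 2) / 2 := by
  have hab : a ≤ b := ham.trans hmb
  rw [MeasureTheory.integral_Icc_eq_integral_Ioc, ← intervalIntegral.integral_of_le hab]
  have h1 : IntervalIntegrable (fun t => |t - m|) volume a m :=
    ((continuous_id.sub continuous_const).abs).intervalIntegrable _ _
  have h2 : IntervalIntegrable (fun t => |t - m|) volume m b :=
    ((continuous_id.sub continuous_const).abs).intervalIntegrable _ _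
  rw [← intervalIntegral.integral_add_adjacent_intervals h1 h2]
  have e1 : ∫ t in a..m, |t - m| = ∫ t in a..m, (m - t) := by
    apply intervalIntegral.integral_congr
    intro t ht
    rw [Set.uIcc_of_le ham] at ht
    show |t - m| = m - t
    rw [abs_of_nonpos (by linarith [ht.2])]; ring
  have e2 : ∫ t in m..b, |t - m| = ∫ t in m..b, (t - m) := by
    apply intervalIntegral.integral_congr
    intro t ht
    rw [Set.uIcc_of_le hmb] at ht
    show |t - m| = t - m
    rw [abs_of_nonneg (by linarith [ht.1])]
  rw [e1, e2, intervalIntegral.integral_sub intervalIntegrable_const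
    (intervalIntegral.intervalIntegrable_id),
    intervalIntegral.integral_sub intervalIntegral.intervalIntegrable_id
    intervalIntegrable_const, intervalIntegral.integral_const,
    intervalIntegral.integral_const, integral_id, integral_id]
  simp only [smul_eq_mul]
  ring

lemma coord_abs_integral {n : ℕ} (α β c : Fin n → ℝ) (hαβ : α ≤ β) (j : Fin n) :
    ∫ x in Set.Icc α β, |x j - c j| =
      (∏ l ∈ Finset.univ.erase j, (β l - α l)) * ∫ t in Set.Icc (α j) (β j), |t - c j| := by
  set f : Fin n → ℝ → ℝ := fun i t =>
    Set.indicator (Set.Icc (α i) (β i)) (fun t => if i = j then |t - c j| else 1) t with hf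
  have hcont : ∀ i, Continuous (fun t : ℝ => if i = j then |t - c j| else 1) := by
    intro i
    split_ifs
    · exact (continuous_id.sub continuous_const).abs
    · exact continuous_const
  have hfi : ∀ i, Integrable (f i) := by
    intro i
    rw [hf]
    rw [integrable_indicator_iff measurableSet_Icc]
    exact (hcont i).integrableOn_Icc
  have hprod : ∀ x : Fin n → ℝ,
      Set.indicator (Set.Icc α β) (fun x => |x j - c j|) x = ∏ i, f i (x i) := by
    intro x
    by_cases hx : x ∈ Set.Icc α β
    · rw [Set.indicator_of_mem hx]
      have hmem : ∀ i, x i ∈ Set.Icc (α i) (β i) := fun i => ⟨hx.1 i, hx.2 i⟩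
      simp only [hf]
      rw [Finset.prod_congr rfl (fun i _ => Set.indicator_of_mem (hmem i) _)]
      simp
    · rw [Set.indicator_of_notMem hx]
      have : ∃ i, x i ∉ Set.Icc (α i) (β i) := by
        by_contra h
        push_neg at h
        exact hx ⟨fun i => (h i).1, fun i => (h i).2⟩
      obtain ⟨i, hi⟩ := this
      exact (Finset.prod_eq_zero (mem_univ i) (Set.indicator_of_notMem hi _)).symm
  have key : ∫ x in Set.Icc α β, |x j - c j| = ∏ i, ∫ t, f i t := by
    rw [← integral_indicator measurableSet_Icc]
    rw [show (fun x : Fin n → ℝ => Set.indicator (Set.Icc α β) (fun x => |x j - c j|) x)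
        = fun x => ∏ i, f i (x i) from funext hprod]
    exact MeasureTheory.integral_fintype_prod_eq_prod f
  have hval : ∀ i, ∫ t, f i t =
      if i = j then (∫ t in Set.Icc (α j) (β j), |t - c j|) else (β i - α i) := by
    intro i
    rw [hf]
    simp only
    rw [integral_indicator measurableSet_Icc]
    by_cases hij : i = j
    · subst hij
      simp
    · simp only [hij, if_false, if_neg hij]
      rw [setIntegral_const]
      rw [measureReal_def, Real.volume_Icc, ENNReal.toReal_ofReal (by linarith [hαβ i])]
      simp
  rw [key, ← Finset.mul_prod_erase univ _ (mem_univ j), hval, if_pos rfl,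
    Finset.prod_congr rfl (fun i hi => by rw [hval i, if_neg (Finset.ne_of_mem_erase hi)]),
    mul_comm]

/-- Lemma: solution of the pointwise relaxed maximization problem:
over all `L`-Lipschitz (ℓ¹) functions `τ` on the hyperrectangle `R` with `∫_R τ = p`,
the largest attainable value at a fixed point `c ∈ R` equals
`p/λ(R) + (L/(2λ(R))) Σ_j (Π_{ℓ≠j} δ_ℓ) ((c_j−α_j)² + (β_j−c_j)²)`, and it is attained. -/
theorem relaxed_pointwise_max_over_rectangle
    (n : ℕ)
    (α β : Fin n → ℝ)
    (R : Set (Fin n → ℝ)) (hR : R = Set.Icc α β)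
    (hRpos : 0 < volume R)
    (L p : ℝ) (hL : 0 ≤ L)
    (c : Fin n → ℝ) (hc : c ∈ R) :
    IsGreatest
      {y : ℝ | ∃ τ : (Fin n → ℝ) → ℝ,
        (∀ x ∈ R, ∀ x' ∈ R, |τ x - τ x'| ≤ L * ∑ j : Fin n, |x j - x' j|) ∧
        (∫ s in R, τ s) = p ∧
        y = τ c}
      (p / (volume R).toReal
        + L / (2 * (volume R).toReal) *
            ∑ j : Fin n, (∏ l ∈ Finset.univ.erase j, (β l - α l)) *
              ((c j - α j) ^ 2 + (β j - c j) ^ 2)) := by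
  subst hR
  have hαβ : α ≤ β := le_trans hc.1 hc.2
  have hfin : volume (Set.Icc α β) < ⊤ := isCompact_Icc.measure_lt_top
  set V : ℝ := (volume (Set.Icc α β)).toReal with hV
  have hVpos : 0 < V := ENNReal.toReal_pos hRpos.ne' hfin.ne
  set S : ℝ := ∑ j : Fin n, (∏ l ∈ Finset.univ.erase j, (β l - α l)) *
      ((c j - α j) ^ 2 + (β j - c j) ^ 2) with hS
  set M : ℝ := p / V + L / (2 * V) * S with hM
  -- continuity and integrability of the sum of abs
  have hcontsum : Continuous (fun x : Fin n → ℝ => ∑ j : Fin n, |x j - c j|) :=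
    continuous_finset_sum _ fun j _ => ((continuous_apply j).sub continuous_const).abs
  have hint : IntegrableOn (fun x : Fin n → ℝ => ∑ j : Fin n, |x j - c j|) (Set.Icc α β) :=
    hcontsum.integrableOn_Icc
  have hintj : ∀ j : Fin n, IntegrableOn (fun x : Fin n → ℝ => |x j - c j|) (Set.Icc α β) :=
    fun j => (((continuous_apply j).sub continuous_const).abs).integrableOn_Icc
  have hIsum : ∫ x in Set.Icc α β, ∑ j : Fin n, |x j - c j| = S / 2 := by
    rw [integral_finset_sum _ (fun j _ => hintj j), hS, Finset.sum_div]
    apply Finset.sum_congr rfl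
    intro j _
    rw [coord_abs_integral α β c hαβ j, one_dim_abs_integral _ _ _ (hc.1 j) (hc.2 j)]
    ring
  have hconst : IntegrableOn (fun _ : Fin n → ℝ => M) (Set.Icc α β) :=
    integrableOn_const hfin.ne
  constructor
  · -- membership: the witness
    refine ⟨fun x => M - L * ∑ j : Fin n, |x j - c j|, ?_, ?_, ?_⟩
    · intro x hx x' hx'
      have h1 : abs ((∑ j : Fin n, |x' j - c j|) - ∑ j : Fin n, |x j - c j|)
          ≤ ∑ j : Fin n, |x j - x' j| := by
        rw [← Finset.sum_sub_distrib]
        refine (Finset.abs_sum_le_sum_abs _ _).trans (Finset.sum_le_sum ?_)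
        intro j _
        calc abs (|x' j - c j| - |x j - c j|) ≤ |(x' j - c j) - (x j - c j)| :=
              abs_abs_sub_abs_le_abs_sub _ _
          _ = |x' j - x j| := by congr 1; ring
          _ = |x j - x' j| := abs_sub_comm _ _
      have h2 : (M - L * ∑ j : Fin n, |x j - c j|) - (M - L * ∑ j : Fin n, |x' j - c j|)
          = L * (∑ j : Fin n, |x' j - c j| - ∑ j : Fin n, |x j - c j|) := by ring
      rw [h2, abs_mul, abs_of_nonneg hL]
      exact mul_le_mul_of_nonneg_left h1 hL
    · rw [integral_sub hconst (hint.const_mul L), setIntegral_const, MeasureTheory.integral_const_mul L, hIsum]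
      rw [smul_eq_mul, measureReal_def, ← hV, hM]
      field_simp
      ring
    · simp
  · -- upper bound
    rintro y ⟨τ, hLip, hInt, rfl⟩
    have hτcont : ContinuousOn τ (Set.Icc α β) := by
      apply LipschitzOnWith.continuousOn (K := Real.toNNReal (L * n))
      rw [lipschitzOnWith_iff_dist_le_mul]
      intro x hx y hy
      rw [Real.dist_eq]
      calc |τ x - τ y| ≤ L * ∑ j : Fin n, |x j - y j| := hLip x hx y hy
        _ ≤ L * ∑ _j : Fin n, dist x y := by
            refine mul_le_mul_of_nonneg_left (Finset.sum_le_sum fun j _ => ?_) hL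
            rw [← Real.dist_eq]
            exact dist_le_pi_dist x y j
        _ = (L * n) * dist x y := by
            rw [Finset.sum_const, Finset.card_univ, Fintype.card_fin, nsmul_eq_mul]; ring
        _ = ↑(Real.toNNReal (L * n)) * dist x y := by
            rw [Real.coe_toNNReal _ (by positivity)]
    have hτint : IntegrableOn τ (Set.Icc α β) := hτcont.integrableOn_compact isCompact_Icc
    have hle : ∀ x ∈ Set.Icc α β, τ c - L * ∑ j : Fin n, |x j - c j| ≤ τ x := by
      intro x hx
      have h1 : τ c - τ x ≤ L * ∑ j : Fin n, |c j - x j| :=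
        (le_abs_self _).trans (hLip c hc x hx)
      have h2 : ∑ j : Fin n, |c j - x j| = ∑ j : Fin n, |x j - c j| :=
        Finset.sum_congr rfl fun j _ => abs_sub_comm _ _
      rw [h2] at h1
      linarith
    have hconst' : IntegrableOn (fun _ : Fin n → ℝ => τ c) (Set.Icc α β) :=
      integrableOn_const hfin.ne
    have hsub : IntegrableOn (fun x : Fin n → ℝ => τ c - L * ∑ j : Fin n, |x j - c j|)
        (Set.Icc α β) := hconst'.sub (hint.const_mul L)
    have hmono := setIntegral_mono_on hsub hτint measurableSet_Icc hle
    rw [hInt, integral_sub hconst' (hint.const_mul L), setIntegral_const,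
      MeasureTheory.integral_const_mul L, hIsum, smul_eq_mul, measureReal_def, ← hV] at hmono
    have h3 : τ c ≤ (p + L * S / 2) / V := by
      rw [le_div_iff₀ hVpos]
      nlinarith
    have h4 : (p + L * S / 2) / V = p / V + L / (2 * V) * S := by
      field_simp
    rw [h4] at h3; exact h3
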